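/- Let X be a simplicial set, G a simplicial group, and τ : X_{>0} → G a twisting function. If x ∈ X_{n+1} (n ≥ 0) is a degenerate simplex, then for every i ∈ S_{n+1} the simplex hatSz_i x ∈ (X ×_τ G)_{n+1} is degenerate (i.e. lies in the image of some degeneracy operator of X ×_τ G). -/

import Mathlib

open CategoryTheory Simplicial

/-- `memS n l i` means `i ∈ S_{n,l}`: a sequence of length `l` with
`0 ≤ i_s ≤ n - s` for `1 ≤ s ≤ l` (here `i.getD t 0` is the entry `i_{t+1}`). -/
def memS (n l : ℕ) (i : List ℕ) : Prop :=
  i.length = l ∧ ∀ t < l, i.getD t 0 + t + 1 ≤ n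

/-- The ordered set remaining from `{0, …, n}` after performing the first `r`
removal steps prescribed by `i`: at each step the element at (0-indexed)
position `i_r + 1` of the remaining set is removed. -/
def restAfter (n : ℕ) (i : List ℕ) (r : ℕ) : List ℕ :=
  (i.take r).foldl (fun L a => L.eraseIdx (a + 1)) (List.range (n + 1))

/-- The ordered set remaining from `{0, …, n}` after the whole removal
procedure prescribed by `i`. -/
def restList (n : ℕ) (i : List ℕ) : List ℕ := restAfter n i i.length

/-- The element `e_{r+1}` removed at (0-indexed) step `r` of the removal
procedure on `{0, …, n}` prescribed by `i`. -/
def elemRemoved (n : ℕ) (i : List ℕ) (r : ℕ) : ℕ :=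
  (restAfter n i r).getD (i.getD r 0 + 1) 0

/-- The component `α_s` of `Ψ_p(i)`, for the interval `(a, b) = (p_{s-1}, p_s)`:
the set of (0-indexed) steps at which an element strictly between `a` and `b`
is removed. -/
def psiAlpha (n : ℕ) (i : List ℕ) (a b : ℕ) : Finset ℕ :=
  (Finset.range i.length).filter
    (fun r => a < elemRemoved n i r ∧ elemRemoved n i r < b)

/-- The component `j_s` of `Ψ_p(i)`, for the interval `(a, b) = (p_{s-1}, p_s)`:
its `u`-th entry is `w - 1` where the `u`-th element of `(a, b)` to be removed
is, at the moment of its removal, the `w`-th smallest element of `(a, b)` still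
present. -/
def psiJ (n : ℕ) (i : List ℕ) (a b : ℕ) : List ℕ :=
  ((List.range i.length).filter
      (fun r => decide (a < elemRemoved n i r ∧ elemRemoved n i r < b))).map
    (fun r => ((restAfter n i r).filter
      (fun y => decide (a < y ∧ y < elemRemoved n i r))).length)

/-- `α` is a `(q_0, …, q_{k-1})`-shuffle: an ordered partition of
`{0, …, q_0 + ⋯ + q_{k-1} - 1}` with `|α_s| = q_s`. -/
def IsShuffleF {k : ℕ} (q : Fin k → ℕ) (α : Fin k → Finset ℕ) : Prop :=
  (∀ s, (α s).card = q s) ∧ (∀ s t, s ≠ t → Disjoint (α s) (α t)) ∧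
    Finset.univ.biUnion α = Finset.range (∑ s, q s)

/-- The sign exponent `(α)` of a shuffle: the number of pairs `(a, b)` with
`a ∈ α_s`, `b ∈ α_t`, `s < t` and `a > b`. -/
def shuffleExpN (k : ℕ) (α : ℕ → Finset ℕ) : ℕ :=
  ∑ s ∈ Finset.range k, ∑ t ∈ Finset.range k,
    if s < t then ∑ a ∈ α s, ((α t).filter (fun b => b < a)).card else 0

/-- Vertex map of the derived operator. -/
def derivedFun (f : ℕ → ℕ) : ℕ → ℕ := fun t => if t = 0 then 0 else f (t - 1) + 1

/-- Vertex map of the face map `δ_j`. -/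
def deltaFun (j : ℕ) : ℕ → ℕ := fun t => if t < j then t else t + 1

/-- Vertex map of the degeneracy map `σ_j`. -/
def sigmaFun (j : ℕ) : ℕ → ℕ := fun t => if t ≤ j then t else t - 1

/-- Vertex map of the Szczarba operator `D_i^k`. -/
def DFun : List ℕ → ℕ → ℕ → ℕ := fun i k => match i, k with
  | [], _ => id
  | (i1 :: i'), k =>
    if k < i1 then deltaFun (i1 - k) ∘ sigmaFun 0 ∘ derivedFun (DFun i' k)
    else if k = i1 then derivedFun (DFun i' k)
    else sigmaFun 0 ∘ derivedFun (DFun i' (k - 1))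

/-- The morphism `[b] ⟶ [a]` in the simplex category whose vertex map is (the
monotone clamped version of) `f`.  When `f` is monotone and maps `[b]` into `[a]`
this is exactly the morphism with vertex map `f`. -/
def mkHomF (a b : ℕ) (f : ℕ → ℕ) : (SimplexCategory.mk b ⟶ SimplexCategory.mk a) :=
  SimplexCategory.mkHom
    { toFun := fun t => ⟨min ((Finset.range (t.1 + 1)).sup f) a,
        Nat.lt_succ_of_le (min_le_right _ _)⟩
      monotone' := fun u v huv => by
        simp only [Fin.mk_le_mk]
        exact min_le_min
          (Finset.sup_mono (Finset.range_subset_range.mpr (Nat.succ_le_succ huv))) le_rfl }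

/-- The natural simplicial operator `X_a → X_b` with vertex map `f : [b] → [a]`. -/
def simpOp (X : SSet) (f : ℕ → ℕ) (a b : ℕ) (x : X _⦋a⦌) : X _⦋b⦌ :=
  X.map (mkHomF a b f).op x

/-- The natural simplicial operator `G_a → G_b` with vertex map `f : [b] → [a]`,
for a simplicial group `G`. -/
def grpOp (G : CategoryTheory.SimplicialObject GrpCat) (f : ℕ → ℕ) (a b : ℕ)
    (g : G _⦋a⦌) : G _⦋b⦌ :=
  (G.map (mkHomF a b f).op) g

/-- A twisting function `τ : X_{>0} → G`. -/
structure TwistingFn (X : SSet) (G : CategoryTheory.SimplicialObject GrpCat) where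
  map : ∀ n : ℕ, X _⦋n + 1⦌ → G _⦋n⦌
  d0 : ∀ (n : ℕ) (x : X _⦋n + 2⦌),
    grpOp G (deltaFun 0) (n + 1) n (map (n + 1) x)
      = (map n (simpOp X (deltaFun 0) (n + 2) (n + 1) x))⁻¹
        * map n (simpOp X (deltaFun 1) (n + 2) (n + 1) x)
  dk : ∀ (n k : ℕ) (x : X _⦋n + 2⦌), 0 < k → k < n + 2 →
    grpOp G (deltaFun k) (n + 1) n (map (n + 1) x)
      = map n (simpOp X (deltaFun (k + 1)) (n + 2) (n + 1) x)
  sk : ∀ (n k : ℕ) (x : X _⦋n + 1⦌), k < n + 1 →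
    grpOp G (sigmaFun k) n (n + 1) (map n x)
      = map (n + 1) (simpOp X (sigmaFun (k + 1)) (n + 1) (n + 2) x)
  s0 : ∀ (n : ℕ) (x : X _⦋n⦌), map n (simpOp X (sigmaFun 0) n (n + 1) x) = 1

/-- Szczarba's operator `Sz_i : X_{n+1} → G_n`. -/
def Sz {X : SSet} {G : CategoryTheory.SimplicialObject GrpCat} (τ : TwistingFn X G)
    (n : ℕ) (i : List ℕ) (x : X _⦋n + 1⦌) : G _⦋n⦌ :=
  ((List.range (n + 1)).map (fun r =>
    grpOp G (DFun i r) (n - r) n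
      ((τ.map (n - r) (simpOp X (fun t => t + r) (n + 1) ((n - r) + 1) x))⁻¹))).prod

/-- The group component of the operator `hatSz_i : X_n → X_n × G_n`. -/
def hatSzG {X : SSet} {G : CategoryTheory.SimplicialObject GrpCat} (τ : TwistingFn X G)
    (n : ℕ) (i : List ℕ) (x : X _⦋n⦌) : G _⦋n⦌ :=
  ((List.range n).map (fun r =>
    grpOp G (DFun i (r + 1)) (n - (r + 1)) n
      ((τ.map (n - (r + 1)) (simpOp X (fun t => t + r) n ((n - (r + 1)) + 1) x))⁻¹))).prod

/-- Szczarba's operator `hatSz_i : X_n → (X ×_τ G)_n = X_n × G_n`. -/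
def hatSz {X : SSet} {G : CategoryTheory.SimplicialObject GrpCat} (τ : TwistingFn X G)
    (n : ℕ) (i : List ℕ) (x : X _⦋n⦌) : X _⦋n⦌ × G _⦋n⦌ :=
  (simpOp X (DFun i 0) n n x, hatSzG τ n i x)

/-- The `r`-fold iterate of the zeroth face map of the twisted Cartesian
product `X ×_τ G`. -/
def twD0pow {X : SSet} {G : CategoryTheory.SimplicialObject GrpCat} (τ : TwistingFn X G) :
    (r : ℕ) → (m : ℕ) → X _⦋m + r⦌ × (G _⦋m + r⦌ : Type _) → X _⦋m⦌ × (G _⦋m⦌ : Type _) := fun r m z => match r, m, z with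
  | 0, _, z => z
  | r + 1, m, z =>
      twD0pow τ r m
        (simpOp X (deltaFun 0) (m + r + 1) (m + r) z.1,
         τ.map (m + r) z.1 * grpOp G (deltaFun 0) (m + r + 1) (m + r) z.2)

/-- Vertex map of the iterated degeneracy `s_B` on a finite set `B`. -/
def degenFun (B : Finset ℕ) : ℕ → ℕ := fun t => t - (B.filter (fun b => b < t)).card

/-- The map `Φ : S_n × [n] → S_{n-1} × [n-1]`. -/
def Phi : List ℕ → ℕ → List ℕ × ℕ := fun i p => match i, p with
  | [], _ => ([], 0)
  | (i1 :: i'), p =>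
    if p < i1 then ((i1 - 1) :: (Phi i' p).1, (Phi i' p).2 + 1)
    else if p = i1 ∨ p = i1 + 1 then (i', 0)
    else (i1 :: (Phi i' (p - 1)).1, (Phi i' (p - 1)).2 + 1)

namespace SzAux


def Good (i : List ℕ) : Prop := ∀ t < i.length, i.getD t 0 + t + 1 ≤ i.length

def J : List ℕ → ℕ → ℕ := fun i p => match i, p with
  | [], _ => 0
  | (i1 :: i'), p =>
    if p + 1 < i1 then J i' p + 1
    else if p + 1 = i1 ∨ p = i1 then 0
    else J i' (p - 1) + 1

lemma monotone_deltaFun (j : ℕ) : Monotone (deltaFun j) := by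
  intro a b h; simp only [deltaFun]; split_ifs <;> omega

lemma monotone_sigmaFun (j : ℕ) : Monotone (sigmaFun j) := by
  intro a b h; simp only [sigmaFun]; split_ifs <;> omega

lemma monotone_derivedFun {f : ℕ → ℕ} (hf : Monotone f) : Monotone (derivedFun f) := by
  intro a b h; simp only [derivedFun]
  split_ifs with h1 h2 h2
  · omega
  · omega
  · omega
  · have := hf (show a - 1 ≤ b - 1 by omega); omega

lemma DFun_monotone : ∀ (i : List ℕ) (k : ℕ), Monotone (DFun i k) := by
  intro i
  induction i with
  | nil => intro k; exact monotone_id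
  | cons i1 i' ih =>
    intro k
    show Monotone (DFun (i1 :: i') k)
    simp only [DFun]
    split_ifs with h1 h2
    · exact (monotone_deltaFun _).comp ((monotone_sigmaFun _).comp
        (monotone_derivedFun (ih k)))
    · exact monotone_derivedFun (ih k)
    · exact (monotone_sigmaFun _).comp (monotone_derivedFun (ih (k-1)))

lemma sigmaFun_zero_succ (a : ℕ) : sigmaFun 0 (a + 1) = a := by simp [sigmaFun]

lemma derivedFun_zero (f : ℕ → ℕ) : derivedFun f 0 = 0 := rfl

lemma derivedFun_succ (f : ℕ → ℕ) (t : ℕ) : derivedFun f (t + 1) = f t + 1 := by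
  simp [derivedFun]

lemma DFun_zero : ∀ (i : List ℕ) (k : ℕ), DFun i k 0 = 0 := by
  intro i
  induction i with
  | nil => intro k; rfl
  | cons i1 i' ih =>
    intro k
    show DFun (i1 :: i') k 0 = 0
    simp only [DFun]
    split_ifs with h1 h2
    · show deltaFun (i1 - k) (sigmaFun 0 (derivedFun (DFun i' k) 0)) = 0
      rw [derivedFun_zero]
      show deltaFun (i1 - k) (sigmaFun 0 0) = 0
      simp [sigmaFun, deltaFun]; omega
    · exact derivedFun_zero _
    · show sigmaFun 0 (derivedFun (DFun i' (k-1)) 0) = 0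
      rw [derivedFun_zero]; rfl

lemma DFun_le : ∀ (i : List ℕ) (k t : ℕ), DFun i k t ≤ t := by
  intro i
  induction i with
  | nil => intro k t; exact le_rfl
  | cons i1 i' ih =>
    intro k t
    show DFun (i1 :: i') k t ≤ t
    simp only [DFun]
    split_ifs with h1 h2
    · show deltaFun (i1 - k) (sigmaFun 0 (derivedFun (DFun i' k) t)) ≤ t
      match t with
      | 0 => rw [derivedFun_zero]; simp [sigmaFun, deltaFun]; omega
      | (u+1) =>
        rw [derivedFun_succ, sigmaFun_zero_succ]
        have := ih k u
        simp only [deltaFun]; split_ifs <;> omega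
    · show derivedFun (DFun i' k) t ≤ t
      match t with
      | 0 => rw [derivedFun_zero]
      | (u+1) => rw [derivedFun_succ]; have := ih k u; omega
    · show sigmaFun 0 (derivedFun (DFun i' (k-1)) t) ≤ t
      match t with
      | 0 => rw [derivedFun_zero]; simp [sigmaFun]
      | (u+1) => rw [derivedFun_succ, sigmaFun_zero_succ]; have := ih (k-1) u; omega

lemma sigma_eq_cases {m a b : ℕ} (hab : a ≤ b) (h : sigmaFun m a = sigmaFun m b) :
    a = b ∨ (a = m ∧ b = m + 1) := by
  simp only [sigmaFun] at h; split_ifs at h <;> omega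

lemma Good_tail {i1 : ℕ} {i' : List ℕ} (h : Good (i1 :: i')) : Good i' := by
  intro t ht
  have := h (t + 1) (by simpa using Nat.succ_lt_succ ht)
  simp at this ⊢; omega

lemma Good_head {i1 : ℕ} {i' : List ℕ} (h : Good (i1 :: i')) : i1 ≤ i'.length := by
  have := h 0 (by simp)
  simpa using this

lemma J_bound : ∀ (i : List ℕ) (p : ℕ), Good i → p < i.length → J i p + 1 ≤ i.length := by
  intro i
  induction i with
  | nil => intro p _ hp; simp at hp
  | cons i1 i' ih =>
    intro p hg hp
    rw [List.length_cons] at hp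
    show J (i1 :: i') p + 1 ≤ i'.length + 1
    simp only [J]
    split_ifs with h1 h2
    · have hi1 := Good_head hg
      have := ih p (Good_tail hg) (by omega)
      omega
    · omega
    · have hlen : 1 ≤ i'.length := by omega
      have := ih (p - 1) (Good_tail hg) (by omega)
      omega

/-- The unified main combinatorial lemma. -/
theorem main_comb : ∀ (i : List ℕ) (p k : ℕ), Good i → p < i.length → k ≠ p + 1 →
    if k ≤ p then
      sigmaFun (p - k) (DFun i k (J i p)) = sigmaFun (p - k) (DFun i k (J i p + 1))
    else DFun i k (J i p) = DFun i k (J i p + 1) := by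
  intro i
  induction i with
  | nil => intro p _ _ hp; simp at hp
  | cons i1 i' ih =>
    intro p k hg hp hk
    rw [List.length_cons] at hp
    have hg' := Good_tail hg
    have hi1 := Good_head hg
    have hD := fun k => DFun_monotone i' k
    have heval : ∀ (k t : ℕ), DFun (i1 :: i') k (t + 1) =
        if k < i1 then deltaFun (i1 - k) (DFun i' k t)
        else if k = i1 then DFun i' k t + 1
        else DFun i' (k - 1) t := by
      intro k t
      show (DFun (i1 :: i') k) (t+1) = _
      simp only [DFun]
      split_ifs with h1 h2
      · show deltaFun (i1 - k) (sigmaFun 0 (derivedFun (DFun i' k) (t+1))) = _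
        rw [derivedFun_succ, sigmaFun_zero_succ]
      · show derivedFun (DFun i' k) (t+1) = _
        rw [derivedFun_succ]
      · show sigmaFun 0 (derivedFun (DFun i' (k-1)) (t+1)) = _
        rw [derivedFun_succ, sigmaFun_zero_succ]
    have hJdef : J (i1 :: i') p =
        if p + 1 < i1 then J i' p + 1
        else if p + 1 = i1 ∨ p = i1 then 0
        else J i' (p - 1) + 1 := rfl
    by_cases hc1 : p + 1 < i1
    · -- CASE B
      rw [hJdef, if_pos hc1]
      set j' := J i' p with hj'
      have hplen : p < i'.length := by omega
      by_cases hkp : k ≤ p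
      · rw [if_pos hkp]
        have ihk := ih p k hg' hplen hk
        rw [if_pos hkp] at ihk
        rw [heval k j', heval k (j' + 1)]
        have hkinner : k < i1 := by omega
        rw [if_pos hkinner, if_pos hkinner]
        rcases sigma_eq_cases (hD k (Nat.le_succ j')) ihk with h | ⟨ha, hb⟩
        · rw [h]
        · rw [ha, hb]
          have e1 : deltaFun (i1 - k) (p - k) = p - k := by
            simp only [deltaFun]; split_ifs <;> omega
          have e2 : deltaFun (i1 - k) (p - k + 1) = p - k + 1 := by
            simp only [deltaFun]; split_ifs <;> omega
          rw [e1, e2]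
          simp only [sigmaFun]; split_ifs <;> omega
      · rw [if_neg hkp]
        have hk2 : p + 2 ≤ k := by omega
        rw [heval k j', heval k (j' + 1)]
        by_cases hkinner : k < i1
        · rw [if_pos hkinner, if_pos hkinner]
          have ihk := ih p k hg' hplen hk
          rw [if_neg (by omega)] at ihk
          rw [ihk]
        · rw [if_neg hkinner, if_neg hkinner]
          by_cases hke : k = i1
          · rw [if_pos hke, if_pos hke]
            have ihk := ih p k hg' hplen hk
            rw [if_neg (by omega)] at ihk
            rw [ihk]
          · rw [if_neg hke, if_neg hke]
            have ihk := ih p (k - 1) hg' hplen (by omega)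
            rw [if_neg (by omega)] at ihk
            rw [ihk]
    · by_cases hc2 : p + 1 = i1 ∨ p = i1
      · -- CASE A : j = 0
        rw [hJdef, if_neg hc1, if_pos hc2]
        have hz : DFun (i1 :: i') k 0 = 0 := DFun_zero _ _
        have h1 : DFun (i1 :: i') k 1 = if k = i1 then 1 else 0 := by
          rw [show (1 : ℕ) = 0 + 1 from rfl, heval k 0]
          split_ifs with h1 h2
          · omega
          · rw [DFun_zero]
            simp only [deltaFun]; split_ifs <;> omega
          · rw [DFun_zero]
          · rw [DFun_zero]
        rw [show (0:ℕ) + 1 = 1 from rfl, hz, h1]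
        by_cases hkp : k ≤ p
        · rw [if_pos hkp]
          by_cases hke : k = i1
          · rw [if_pos hke]
            have : p - k = 0 := by omega
            rw [this]
            simp [sigmaFun]
          · rw [if_neg hke]
        · rw [if_neg hkp]
          by_cases hke : k = i1
          · omega
          · rw [if_neg hke]
      · -- CASE C : p > i1
        rw [hJdef, if_neg hc1, if_neg hc2]
        have hpi1 : i1 < p := by omega
        set j' := J i' (p - 1) with hj'
        have hlen : 1 ≤ i'.length := by omega
        have hplen : p - 1 < i'.length := by omega
        rw [heval k j', heval k (j' + 1)]
        by_cases hkinner : k < i1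
        · rw [if_pos hkinner, if_pos hkinner, if_pos (by omega : k ≤ p)]
          have ihk := ih (p - 1) k hg' hplen (by omega)
          rw [if_pos (by omega)] at ihk
          rcases sigma_eq_cases (hD k (Nat.le_succ j')) ihk with h | ⟨ha, hb⟩
          · rw [h]
          · rw [ha, hb]
            have e1 : deltaFun (i1 - k) (p - 1 - k) = p - k := by
              simp only [deltaFun]; split_ifs <;> omega
            have e2 : deltaFun (i1 - k) (p - 1 - k + 1) = p - k + 1 := by
              simp only [deltaFun]; split_ifs <;> omega
            rw [e1, e2]
            simp only [sigmaFun]; split_ifs <;> omega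
        · rw [if_neg hkinner, if_neg hkinner]
          by_cases hke : k = i1
          · rw [if_pos hke, if_pos hke, if_pos (by omega : k ≤ p)]
            have ihk := ih (p - 1) k hg' hplen (by omega)
            rw [if_pos (by omega)] at ihk
            rcases sigma_eq_cases (hD k (Nat.le_succ j')) ihk with h | ⟨ha, hb⟩
            · rw [h]
            · rw [ha, hb]
              simp only [sigmaFun]; split_ifs <;> omega
          · rw [if_neg hke, if_neg hke]
            have ihk := ih (p - 1) (k - 1) hg' hplen (by omega)
            by_cases hkp : k ≤ p
            · rw [if_pos hkp]
              rw [if_pos (by omega)] at ihk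
              have heq : p - 1 - (k - 1) = p - k := by omega
              rw [heq] at ihk
              exact ihk
            · rw [if_neg hkp]
              rw [if_neg (by omega)] at ihk
              rw [ihk]



lemma sup_range_mono {f : ℕ → ℕ} (hf : Monotone f) (t : ℕ) :
    (Finset.range (t + 1)).sup f = f t := by
  apply le_antisymm
  · exact Finset.sup_le fun b hb => hf (by
      have := Finset.mem_range.mp hb; omega)
  · exact Finset.le_sup (Finset.self_mem_range_succ t)

lemma mkHomF_val (a b : ℕ) (f : ℕ → ℕ) (t : Fin (b + 1)) :
    ((mkHomF a b f).toOrderHom t : ℕ) = min ((Finset.range (t.1 + 1)).sup f) a := rfl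

lemma mkHomF_val_mono (a b : ℕ) {f : ℕ → ℕ} (hf : Monotone f) (t : Fin (b + 1)) :
    ((mkHomF a b f).toOrderHom t : ℕ) = min (f t.1) a := by
  rw [mkHomF_val, sup_range_mono hf]

lemma collapse_hom (a nn j : ℕ) (hj : j ≤ nn)
    (F : SimplexCategory.mk (nn + 1) ⟶ SimplexCategory.mk a)
    (hF : F.toOrderHom ⟨j, by rw [SimplexCategory.len_mk]; omega⟩ = F.toOrderHom ⟨j + 1, by rw [SimplexCategory.len_mk]; omega⟩) :
    mkHomF nn (nn + 1) (sigmaFun j) ≫ mkHomF (nn + 1) nn (deltaFun j) ≫ F = F := by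
  apply SimplexCategory.Hom.ext
  apply OrderHom.ext
  funext t
  show F.toOrderHom ((mkHomF (nn+1) nn (deltaFun j)).toOrderHom
    ((mkHomF nn (nn+1) (sigmaFun j)).toOrderHom t)) = F.toOrderHom t
  have hmσ : Monotone (sigmaFun j) := by
    intro u v h; simp only [sigmaFun]; split_ifs <;> omega
  have hmδ : Monotone (deltaFun j) := by
    intro u v h; simp only [deltaFun]; split_ifs <;> omega
  set s := (mkHomF nn (nn+1) (sigmaFun j)).toOrderHom t with hs
  have hsv : (s : ℕ) = min (sigmaFun j t.1) nn := mkHomF_val_mono _ _ hmσ t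
  set d := (mkHomF (nn+1) nn (deltaFun j)).toOrderHom s with hd
  have hdv : (d : ℕ) = min (deltaFun j s.1) (nn + 1) := mkHomF_val_mono _ _ hmδ s
  have ht : t.1 < nn + 2 := by have := t.isLt; simpa [SimplexCategory.len_mk] using this
  by_cases hc : t.1 = j
  · have hdj : d = ⟨j + 1, by rw [SimplexCategory.len_mk]; omega⟩ := by
      apply Fin.eq_mk_iff_val_eq.mpr
      rw [hdv, hsv]
      simp only [sigmaFun, deltaFun]
      split_ifs <;> omega
    have h2 : F.toOrderHom t = F.toOrderHom ⟨j, by rw [SimplexCategory.len_mk]; omega⟩ :=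
      congrArg _ (Fin.ext hc)
    rw [hdj, h2, hF]
  · have hdj : d = t := by
      apply Fin.ext
      rw [hdv, hsv]
      simp only [sigmaFun, deltaFun]
      split_ifs <;> omega
    rw [hdj]

lemma simpOp_simpOp (X : SSet) (f g : ℕ → ℕ) (a b c : ℕ) (x : X _⦋a⦌) :
    simpOp X g b c (simpOp X f a b x) = X.map ((mkHomF b c g) ≫ (mkHomF a b f)).op x := by
  simp only [simpOp, ← FunctorToTypes.map_comp_apply, CategoryTheory.op_comp]

lemma grpOp_grpOp (G : CategoryTheory.SimplicialObject GrpCat) (f g : ℕ → ℕ) (a b c : ℕ)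
    (x : G _⦋a⦌) :
    grpOp G g b c (grpOp G f a b x) = G.map ((mkHomF b c g) ≫ (mkHomF a b f)).op x := by
  simp only [grpOp]
  rw [CategoryTheory.op_comp, G.map_comp]
  rfl

lemma fixed_simp (X : SSet) (a nn j : ℕ) (hj : j ≤ nn)
    (F : SimplexCategory.mk (nn + 1) ⟶ SimplexCategory.mk a)
    (hF : F.toOrderHom ⟨j, by rw [SimplexCategory.len_mk]; omega⟩ = F.toOrderHom ⟨j + 1, by rw [SimplexCategory.len_mk]; omega⟩) (x : X _⦋a⦌) :
    simpOp X (sigmaFun j) nn (nn + 1) (simpOp X (deltaFun j) (nn + 1) nn (X.map F.op x))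
      = X.map F.op x := by
  have h1 : simpOp X (deltaFun j) (nn+1) nn (X.map F.op x)
      = X.map ((mkHomF (nn+1) nn (deltaFun j)) ≫ F).op x := by
    simp only [simpOp, ← FunctorToTypes.map_comp_apply, CategoryTheory.op_comp]
  rw [h1]
  have h2 : simpOp X (sigmaFun j) nn (nn+1) (X.map ((mkHomF (nn+1) nn (deltaFun j)) ≫ F).op x)
      = X.map ((mkHomF nn (nn+1) (sigmaFun j)) ≫ (mkHomF (nn+1) nn (deltaFun j)) ≫ F).op x := by
    simp only [simpOp, ← FunctorToTypes.map_comp_apply, CategoryTheory.op_comp, Category.assoc]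
  rw [h2, collapse_hom a nn j hj F hF]

lemma fixed_grp (G : CategoryTheory.SimplicialObject GrpCat) (a nn j : ℕ) (hj : j ≤ nn)
    (F : SimplexCategory.mk (nn + 1) ⟶ SimplexCategory.mk a)
    (hF : F.toOrderHom ⟨j, by rw [SimplexCategory.len_mk]; omega⟩ = F.toOrderHom ⟨j + 1, by rw [SimplexCategory.len_mk]; omega⟩) (x : G _⦋a⦌) :
    grpOp G (sigmaFun j) nn (nn + 1) (grpOp G (deltaFun j) (nn + 1) nn (G.map F.op x))
      = G.map F.op x := by
  have h1 : grpOp G (deltaFun j) (nn+1) nn (G.map F.op x)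
      = G.map ((mkHomF (nn+1) nn (deltaFun j)) ≫ F).op x := by
    simp only [grpOp]
    rw [CategoryTheory.op_comp, G.map_comp]; rfl
  rw [h1]
  have h2 : grpOp G (sigmaFun j) nn (nn+1)
        (G.map ((mkHomF (nn+1) nn (deltaFun j)) ≫ F).op x)
      = G.map ((mkHomF nn (nn+1) (sigmaFun j)) ≫ (mkHomF (nn+1) nn (deltaFun j)) ≫ F).op x := by
    simp only [grpOp]
    rw [CategoryTheory.op_comp (f := mkHomF nn (nn+1) (sigmaFun j))
      (g := (mkHomF (nn+1) nn (deltaFun j)) ≫ F), G.map_comp]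
    rfl
  rw [h2, collapse_hom a nn j hj F hF]


lemma comp_val (a b c : ℕ) (f g : ℕ → ℕ) (hf : Monotone f) (hg : Monotone g)
    (t : Fin (c + 1)) :
    (((mkHomF b c g) ≫ (mkHomF a b f)).toOrderHom t : ℕ) = min (f (min (g t.1) b)) a := by
  show ((mkHomF a b f).toOrderHom ((mkHomF b c g).toOrderHom t) : ℕ) = _
  rw [mkHomF_val_mono _ _ hf, mkHomF_val_mono _ _ hg]

lemma monotone_addr (r : ℕ) : Monotone (fun t : ℕ => t + r) := by intro a b h; dsimp only; omega

def grpHom (G : CategoryTheory.SimplicialObject GrpCat) (f : ℕ → ℕ) (a b : ℕ) :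
    (G _⦋a⦌ : Type _) →* (G _⦋b⦌ : Type _) := (G.map (mkHomF a b f).op).hom

end SzAux

set_option maxHeartbeats 2000000 in
/-- If `x ∈ X_{n+1}` (`n ≥ 0`) is degenerate, then for every
`i ∈ S_{n+1}` the simplex `hatSz_i x ∈ (X ×_τ G)_{n+1}` is degenerate, i.e.
lies in the image of some degeneracy operator of the twisted Cartesian product
(whose degeneracies act componentwise). -/
theorem szczarba_hatSz_of_degenerate (X : SSet) (G : CategoryTheory.SimplicialObject GrpCat)
    (τ : TwistingFn X G) (n : ℕ) (x : X _⦋n + 1⦌)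
    (hx : ∃ j ≤ n, ∃ y : X _⦋n⦌, x = simpOp X (sigmaFun j) n (n + 1) y)
    (i : List ℕ) (hi : memS (n + 1) (n + 1) i) :
    ∃ j, j + 1 ≤ n + 1 ∧ ∃ z : X _⦋n⦌ × (G _⦋n⦌ : Type _),
      hatSz τ (n + 1) i x
        = (simpOp X (sigmaFun j) n (n + 1) z.1, grpOp G (sigmaFun j) n (n + 1) z.2) := by
  obtain ⟨p, hp, y, hy⟩ := hx
  obtain ⟨hlen, hbound⟩ := hi
  have hgood : SzAux.Good i := by
    intro t ht
    rw [hlen] at ht ⊢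
    exact hbound t ht
  have hplen : p < i.length := by rw [hlen]; omega
  have hjb' := SzAux.J_bound i p hgood hplen
  rw [hlen] at hjb'
  set j := SzAux.J i p with hjdef
  have hj : j ≤ n := by omega
  refine ⟨j, by omega, ?_⟩
  have hmono := fun k => SzAux.DFun_monotone i k
  have hle := fun k t => SzAux.DFun_le i k t
  -- the key pointwise facts
  have hmain := fun k hk => SzAux.main_comb i p k hgood hplen hk
  -- X component fixed
  set A := simpOp X (DFun i 0) (n + 1) (n + 1) x with hA
  set B := hatSzG τ (n + 1) i x with hB
  refine ⟨(simpOp X (deltaFun j) (n + 1) n A, grpOp G (deltaFun j) (n + 1) n B), ?_⟩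
  have hXfix : simpOp X (sigmaFun j) n (n + 1) (simpOp X (deltaFun j) (n + 1) n A) = A := by
    set F0 := (mkHomF (n + 1) (n + 1) (DFun i 0)) ≫ (mkHomF n (n + 1) (sigmaFun p)) with hF0
    have hAy : simpOp X (DFun i 0) (n + 1) (n + 1) (simpOp X (sigmaFun p) n (n + 1) y)
        = X.map F0.op y := SzAux.simpOp_simpOp X (sigmaFun p) (DFun i 0) n (n + 1) (n + 1) y
    rw [hA, hy, hAy]
    have hconst : F0.toOrderHom ⟨j, by rw [SimplexCategory.len_mk]; omega⟩
        = F0.toOrderHom ⟨j + 1, by rw [SimplexCategory.len_mk]; omega⟩ := by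
      have e1 := SzAux.comp_val n (n + 1) (n + 1) (sigmaFun p) (DFun i 0)
        (SzAux.monotone_sigmaFun p) (hmono 0) ⟨j, by omega⟩
      have e2 := SzAux.comp_val n (n + 1) (n + 1) (sigmaFun p) (DFun i 0)
        (SzAux.monotone_sigmaFun p) (hmono 0) ⟨j + 1, by omega⟩
      have h0 := hmain 0 (by omega)
      rw [if_pos (Nat.zero_le p), Nat.sub_zero] at h0
      apply Fin.ext
      refine e1.trans (Eq.trans ?_ e2.symm)
      rw [min_eq_left (le_trans (hle 0 j) (by omega)),
        min_eq_left (le_trans (hle 0 (j + 1)) (by omega))]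
      exact congrArg (fun v => min v n) h0
    exact SzAux.fixed_simp X n n j hj F0 hconst y
  have hGfix : grpOp G (sigmaFun j) n (n + 1) (grpOp G (deltaFun j) (n + 1) n B) = B := by
    rw [hB]
    set fac : ℕ → (G _⦋n + 1⦌ : Type _) := fun r =>
      grpOp G (DFun i (r + 1)) (n + 1 - (r + 1)) (n + 1)
        ((τ.map (n + 1 - (r + 1))
          (simpOp X (fun t => t + r) (n + 1) ((n + 1 - (r + 1)) + 1) x))⁻¹) with hfac
    show (SzAux.grpHom G (sigmaFun j) n (n + 1))
        ((SzAux.grpHom G (deltaFun j) (n + 1) n)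
          (((List.range (n + 1)).map fac).prod)) = ((List.range (n + 1)).map fac).prod
    rw [map_list_prod (SzAux.grpHom G (deltaFun j) (n + 1) n) _,
        map_list_prod (SzAux.grpHom G (sigmaFun j) n (n + 1)) _,
        List.map_map, List.map_map]
    congr 1
    apply List.map_congr_left
    intro r hr
    have hrn : r < n + 1 := List.mem_range.mp hr
    show grpOp G (sigmaFun j) n (n + 1) (grpOp G (deltaFun j) (n + 1) n (fac r)) = fac r
    rcases lt_trichotomy r p with hrp | hrp | hrp
    · -- CASE r < p : use the twisting relation sk
      obtain ⟨m, hm⟩ : ∃ m, p = r + m + 1 := ⟨p - r - 1, by omega⟩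
      simp only [hfac]
      have hrn' : r < n := by omega
      generalize hq : n + 1 - (r + 1) = q
      obtain ⟨c, rfl⟩ : ∃ c, q = c + 1 := ⟨q - 1, by omega⟩
      have hc : n = r + c + 1 := by omega
      -- rewrite the face of the degenerate simplex
      have hface : simpOp X (fun t => t + r) (n + 1) (c + 1 + 1)
            (simpOp X (sigmaFun p) n (n + 1) y)
          = simpOp X (sigmaFun (m + 1)) (c + 1) (c + 1 + 1)
            (simpOp X (fun t => t + r) n (c + 1) y) := by
        rw [SzAux.simpOp_simpOp, SzAux.simpOp_simpOp]
        congr 1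
        have hMeq : (mkHomF (n + 1) (c + 1 + 1) (fun t => t + r)) ≫
              (mkHomF n (n + 1) (sigmaFun p))
            = (mkHomF (c + 1) (c + 1 + 1) (sigmaFun (m + 1))) ≫
              (mkHomF n (c + 1) (fun t => t + r)) := by
          apply SimplexCategory.Hom.ext
          apply OrderHom.ext
          funext t
          apply Fin.ext
          have e1 := SzAux.comp_val n (n + 1) (c + 1 + 1) (sigmaFun p) (fun t => t + r)
            (SzAux.monotone_sigmaFun p) (SzAux.monotone_addr r) t
          have e2 := SzAux.comp_val n (c + 1) (c + 1 + 1) (fun t => t + r) (sigmaFun (m + 1))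
            (SzAux.monotone_addr r) (SzAux.monotone_sigmaFun (m + 1)) t
          refine e1.trans (Eq.trans ?_ e2.symm)
          have htle : t.1 ≤ c + 1 + 1 := Nat.lt_succ_iff.mp t.isLt
          simp only [sigmaFun]
          split_ifs <;> omega
        rw [hMeq]
      rw [hy, hface]
      have hsk := τ.sk c m (simpOp X (fun t => t + r) n (c + 1) y) (by omega)
      rw [← hsk]
      set g := τ.map c (simpOp X (fun t => t + r) n (c + 1) y) with hg
      have hinv : (grpOp G (sigmaFun m) c (c + 1) g)⁻¹
          = grpOp G (sigmaFun m) c (c + 1) (g⁻¹) :=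
        (map_inv (SzAux.grpHom G (sigmaFun m) c (c + 1)) g).symm
      set F2 := (mkHomF (c + 1) (n + 1) (DFun i (r + 1))) ≫ (mkHomF c (c + 1) (sigmaFun m))
        with hF2
      have hcomp : grpOp G (DFun i (r + 1)) (c + 1) (n + 1)
            (grpOp G (sigmaFun m) c (c + 1) (g⁻¹)) = G.map F2.op (g⁻¹) :=
        SzAux.grpOp_grpOp G (sigmaFun m) (DFun i (r + 1)) c (c + 1) (n + 1) (g⁻¹)
      rw [hinv, hcomp]
      have hwr := hmain (r + 1) (by omega)
      rw [if_pos (by omega : r + 1 ≤ p), (by omega : p - (r + 1) = m)] at hwr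
      have hconst : F2.toOrderHom ⟨j, by rw [SimplexCategory.len_mk]; omega⟩
          = F2.toOrderHom ⟨j + 1, by rw [SimplexCategory.len_mk]; omega⟩ := by
        have e1 := SzAux.comp_val c (c + 1) (n + 1) (sigmaFun m) (DFun i (r + 1))
          (SzAux.monotone_sigmaFun m) (hmono (r + 1)) ⟨j, by omega⟩
        have e2 := SzAux.comp_val c (c + 1) (n + 1) (sigmaFun m) (DFun i (r + 1))
          (SzAux.monotone_sigmaFun m) (hmono (r + 1)) ⟨j + 1, by omega⟩
        apply Fin.ext
        refine e1.trans (Eq.trans ?_ e2.symm)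
        rcases SzAux.sigma_eq_cases (hmono (r + 1) (Nat.le_succ j)) hwr with h | ⟨ha, hb⟩
        · rw [h]
        · rw [ha, hb]
          simp only [sigmaFun]
          split_ifs <;> omega
      exact SzAux.fixed_grp G c n j hj F2 hconst (g⁻¹)
    · -- CASE r = p : the factor is 1
      subst hrp
      have hfac1 : fac r = 1 := by
        simp only [hfac]
        generalize hq : n + 1 - (r + 1) = c
        have hc : n = r + c := by omega
        have hface : simpOp X (fun t => t + r) (n + 1) (c + 1)
              (simpOp X (sigmaFun r) n (n + 1) y)
            = simpOp X (sigmaFun 0) c (c + 1)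
              (simpOp X (fun t => t + r) n c y) := by
          rw [SzAux.simpOp_simpOp, SzAux.simpOp_simpOp]
          congr 1
          have hMeq : (mkHomF (n + 1) (c + 1) (fun t => t + r)) ≫
                (mkHomF n (n + 1) (sigmaFun r))
              = (mkHomF c (c + 1) (sigmaFun 0)) ≫ (mkHomF n c (fun t => t + r)) := by
            apply SimplexCategory.Hom.ext
            apply OrderHom.ext
            funext t
            apply Fin.ext
            have e1 := SzAux.comp_val n (n + 1) (c + 1) (sigmaFun r) (fun t => t + r)
              (SzAux.monotone_sigmaFun r) (SzAux.monotone_addr r) t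
            have e2 := SzAux.comp_val n c (c + 1) (fun t => t + r) (sigmaFun 0)
              (SzAux.monotone_addr r) (SzAux.monotone_sigmaFun 0) t
            refine e1.trans (Eq.trans ?_ e2.symm)
            have htle : t.1 ≤ c + 1 := Nat.lt_succ_iff.mp t.isLt
            simp only [sigmaFun]
            split_ifs <;> omega
          rw [hMeq]
        rw [hy, hface, τ.s0 c (simpOp X (fun t => t + r) n c y), inv_one]
        exact map_one (SzAux.grpHom G (DFun i (r + 1)) c (n + 1))
      rw [hfac1]
      rw [show grpOp G (deltaFun j) (n + 1) n (1 : (G _⦋n+1⦌ : Type _)) = 1 from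
        map_one (SzAux.grpHom G (deltaFun j) (n + 1) n)]
      exact map_one (SzAux.grpHom G (sigmaFun j) n (n + 1))
    · -- CASE r > p : the vertex map itself is constant on {j, j+1}
      have hwr := hmain (r + 1) (by omega)
      rw [if_neg (by omega)] at hwr
      show grpOp G (sigmaFun j) n (n + 1) (grpOp G (deltaFun j) (n + 1) n (fac r)) = fac r
      simp only [hfac]
      set F3 := mkHomF (n + 1 - (r + 1)) (n + 1) (DFun i (r + 1)) with hF3
      have hconst : F3.toOrderHom ⟨j, by rw [SimplexCategory.len_mk]; omega⟩
          = F3.toOrderHom ⟨j + 1, by rw [SimplexCategory.len_mk]; omega⟩ := by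
        have e1 := SzAux.mkHomF_val_mono (n + 1 - (r + 1)) (n + 1) (hmono (r + 1))
          ⟨j, by omega⟩
        have e2 := SzAux.mkHomF_val_mono (n + 1 - (r + 1)) (n + 1) (hmono (r + 1))
          ⟨j + 1, by omega⟩
        apply Fin.ext
        refine e1.trans (Eq.trans ?_ e2.symm)
        exact congrArg (fun v => min v (n + 1 - (r + 1))) hwr
      exact SzAux.fixed_grp G (n + 1 - (r + 1)) n j hj F3 hconst _
  show hatSz τ (n + 1) i x = _
  rw [hatSz]
  exact Prod.ext hXfix.symm hGfix.symm
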